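/- Every vector field of the form S = a₁X₁ + a₂X₂ + a₃X₃ + a₄X₄ + a₅(X₅ − X₆), with constants a₁,…,a₅ ∈ ℝ, is a symmetry of the rule-B rank-2 distribution preserving the area function: (i) the directional derivative of F along S vanishes identically, DF(m)(S(m)) = 0 for all m ∈ ℝ⁶; and (ii) for every m ∈ ℝ⁶, both [S, Z₁−Z₂](m) ∧ (Z₁−Z₂)(m) ∧ (Z₃−Z₁)(m) = 0 and [S, Z₃−Z₁](m) ∧ (Z₁−Z₂)(m) ∧ (Z₃−Z₁)(m) = 0 in the exterior algebra of ℝ⁶. -/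

import Mathlib

def xc (i : Fin 3) : Fin 6 := ⟨2 * i.val, by have := i.isLt; omega⟩

def yc (i : Fin 3) : Fin 6 := ⟨2 * i.val + 1, by have := i.isLt; omega⟩

noncomputable def lieBracket (V W : (Fin 6 → ℝ) → (Fin 6 → ℝ)) :
    (Fin 6 → ℝ) → (Fin 6 → ℝ) :=
  fun m => fderiv ℝ W m (V m) - fderiv ℝ V m (W m)

/-- Rule-B vector fields. -/
def ZB (i : Fin 3) (m : Fin 6 → ℝ) : Fin 6 → ℝ := fun j =>
  if j = xc i then m (xc (i + 1)) - m (xc (i + 2))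
  else if j = yc i then m (yc (i + 1)) - m (yc (i + 2))
  else 0

/-- A constant multiple of the signed area. -/
def F (m : Fin 6 → ℝ) : ℝ :=
  ∑ i : Fin 3, (m (yc i) * m (xc (i + 1)) - m (xc i) * m (yc (i + 1)))

/-- The symmetry fields `X₁,…,X₆` in coordinates `m = (x₁,y₁,x₂,y₂,x₃,y₃)`. -/
def X1 : (Fin 6 → ℝ) → (Fin 6 → ℝ) := fun _ => ![1, 0, 1, 0, 1, 0]
def X2 : (Fin 6 → ℝ) → (Fin 6 → ℝ) := fun _ => ![0, 1, 0, 1, 0, 1]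
def X3 : (Fin 6 → ℝ) → (Fin 6 → ℝ) := fun m => ![m 1, 0, m 3, 0, m 5, 0]
def X4 : (Fin 6 → ℝ) → (Fin 6 → ℝ) := fun m => ![0, m 0, 0, m 2, 0, m 4]
def X5 : (Fin 6 → ℝ) → (Fin 6 → ℝ) := fun m => ![m 0, 0, m 2, 0, m 4, 0]
def X6 : (Fin 6 → ℝ) → (Fin 6 → ℝ) := fun m => ![0, m 1, 0, m 3, 0, m 5]

/- ### Auxiliary material -/

@[simp] lemma vec6_five {α : Type*} (a b c d e f : α) : ![a,b,c,d,e,f] 5 = f := rfl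

@[simp] lemma xc_zero : xc 0 = 0 := rfl
@[simp] lemma xc_one : xc 1 = 2 := rfl
@[simp] lemma xc_two : xc 2 = 4 := rfl
@[simp] lemma yc_zero : yc 0 = 1 := rfl
@[simp] lemma yc_one : yc 1 = 3 := rfl
@[simp] lemma yc_two : yc 2 = 5 := rfl

/-- Coordinates of `ZB 0 - ZB 1` as a linear function. -/
def Uf (v : Fin 6 → ℝ) : Fin 6 → ℝ := ![v 2 - v 4, v 3 - v 5, v 0 - v 4, v 1 - v 5, 0, 0]

/-- Coordinates of `ZB 2 - ZB 0` as a linear function. -/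
def Wf (v : Fin 6 → ℝ) : Fin 6 → ℝ := ![v 4 - v 2, v 5 - v 3, 0, 0, v 0 - v 2, v 1 - v 3]

/-- Coordinates of the linear part of `S`. -/
def Lf (a₃ a₄ a₅ : ℝ) (v : Fin 6 → ℝ) : Fin 6 → ℝ :=
  ![a₅ * v 0 + a₃ * v 1, a₄ * v 0 - a₅ * v 1, a₅ * v 2 + a₃ * v 3,
    a₄ * v 2 - a₅ * v 3, a₅ * v 4 + a₃ * v 5, a₄ * v 4 - a₅ * v 5]

noncomputable def Uclm : (Fin 6 → ℝ) →L[ℝ] (Fin 6 → ℝ) :=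
  LinearMap.toContinuousLinearMap
    { toFun := Uf
      map_add' := by intro v w; funext j; fin_cases j <;> simp [Uf] <;> ring
      map_smul' := by intro c v; funext j; fin_cases j <;> simp [Uf] <;> ring }

noncomputable def Wclm : (Fin 6 → ℝ) →L[ℝ] (Fin 6 → ℝ) :=
  LinearMap.toContinuousLinearMap
    { toFun := Wf
      map_add' := by intro v w; funext j; fin_cases j <;> simp [Wf] <;> ring
      map_smul' := by intro c v; funext j; fin_cases j <;> simp [Wf] <;> ring }

noncomputable def Lclm (a₃ a₄ a₅ : ℝ) : (Fin 6 → ℝ) →L[ℝ] (Fin 6 → ℝ) :=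
  LinearMap.toContinuousLinearMap
    { toFun := Lf a₃ a₄ a₅
      map_add' := by intro v w; funext j; fin_cases j <;> simp [Lf] <;> ring
      map_smul' := by intro c v; funext j; fin_cases j <;> simp [Lf, smul_eq_mul] <;> ring }

@[simp] lemma Uclm_apply (v : Fin 6 → ℝ) : Uclm v = Uf v := rfl
@[simp] lemma Wclm_apply (v : Fin 6 → ℝ) : Wclm v = Wf v := rfl
@[simp] lemma Lclm_apply (a₃ a₄ a₅ : ℝ) (v : Fin 6 → ℝ) : Lclm a₃ a₄ a₅ v = Lf a₃ a₄ a₅ v := rfl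

lemma fderiv_const_add_clm (c : Fin 6 → ℝ) (L : (Fin 6 → ℝ) →L[ℝ] (Fin 6 → ℝ))
    (m : Fin 6 → ℝ) : fderiv ℝ (fun v => c + L v) m = L := by
  simpa using ((hasFDerivAt_const c m).add (L.hasFDerivAt (x := m))).fderiv

open ExteriorAlgebra in
theorem ruleB_affine_symmetries (a₁ a₂ a₃ a₄ a₅ : ℝ)
    (S : (Fin 6 → ℝ) → (Fin 6 → ℝ))
    (hS : S = fun m => a₁ • X1 m + a₂ • X2 m + a₃ • X3 m + a₄ • X4 m +
      a₅ • (X5 m - X6 m)) :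
    (∀ m : Fin 6 → ℝ, fderiv ℝ F m (S m) = 0) ∧
    (∀ m : Fin 6 → ℝ,
      ι ℝ (lieBracket S (ZB 0 - ZB 1) m) * ι ℝ ((ZB 0 - ZB 1) m) *
        ι ℝ ((ZB 2 - ZB 0) m) = 0 ∧
      ι ℝ (lieBracket S (ZB 2 - ZB 0) m) * ι ℝ ((ZB 0 - ZB 1) m) *
        ι ℝ ((ZB 2 - ZB 0) m) = 0) := by
  have hS' : S = fun m => ![a₁, a₂, a₁, a₂, a₁, a₂] + Lclm a₃ a₄ a₅ m := by
    rw [hS]; funext m j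
    fin_cases j <;>
      simp [X1, X2, X3, X4, X5, X6, Lf] <;> ring
  have hSm : ∀ (m : Fin 6 → ℝ) (j : Fin 6),
      S m j = ![a₁, a₂, a₁, a₂, a₁, a₂] j + Lf a₃ a₄ a₅ m j := by
    intro m j; rw [hS']; rfl
  have hU : (ZB 0 - ZB 1) = ⇑Uclm := by
    funext m j
    fin_cases j <;>
      simp +decide [ZB, xc, yc, Uf, Fin.ext_iff]
  have hW : (ZB 2 - ZB 0) = ⇑Wclm := by
    funext m j
    fin_cases j <;>
      simp +decide [ZB, xc, yc, Wf, Fin.ext_iff]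
  have hbU : ∀ m : Fin 6 → ℝ, lieBracket S (ZB 0 - ZB 1) m = 0 := by
    intro m
    unfold lieBracket
    rw [hS', hU, fderiv_const_add_clm, ContinuousLinearMap.fderiv]
    funext j
    fin_cases j <;> simp [Uf, Lf] <;> ring
  have hbW : ∀ m : Fin 6 → ℝ, lieBracket S (ZB 2 - ZB 0) m = 0 := by
    intro m
    unfold lieBracket
    rw [hS', hW, fderiv_const_add_clm, ContinuousLinearMap.fderiv]
    funext j
    fin_cases j <;> simp [Wf, Lf] <;> ring
  constructor
  · intro m
    have hFe : F = fun m : Fin 6 → ℝ =>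
        (m 1 * m 2 - m 0 * m 3) + (m 3 * m 4 - m 2 * m 5) + (m 5 * m 0 - m 4 * m 1) := by
      funext m
      simp +decide [F, Fin.sum_univ_three]
      ring
    have h : ∀ i : Fin 6, HasFDerivAt (fun v : Fin 6 → ℝ => v i)
        ((ContinuousLinearMap.proj i : (Fin 6 → ℝ) →L[ℝ] ℝ)) m :=
      fun i => hasFDerivAt_apply i m
    have hD := ((((h 1).mul (h 2)).sub ((h 0).mul (h 3))).add
        (((h 3).mul (h 4)).sub ((h 2).mul (h 5)))).add
        (((h 5).mul (h 0)).sub ((h 4).mul (h 1)))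
    rw [hFe, (show HasFDerivAt (fun m : Fin 6 → ℝ => (m 1 * m 2 - m 0 * m 3) + (m 3 * m 4 - m 2 * m 5) + (m 5 * m 0 - m 4 * m 1)) _ m from hD).fderiv]
    have hs := fun j => hSm m j
    simp [hs, Lf]
    ring
  · intro m
    refine ⟨?_, ?_⟩ <;> simp [hbU m, hbW m]
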